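/- Let Π = (R, CR) be a finite ground CR-program over a set of atoms At, and let τ(Π) be its weak-constraint translation using fresh atoms appl_1, …, appl_N. If A is an answer set of the CR-program Π, then there exists an answer set S of the weak-constraint program τ(Π) such that A is exactly the set of literals in S not formed from any of the fresh atoms appl_1, …, appl_N. -/

import Mathlib

/-- A literal is an atom or its classical negation. -/
inductive Lit (α : Type) where
  | pos : α → Lit α
  | neg : α → Lit α
deriving DecidableEq

/-- The atom a literal is formed from. -/
def Lit.atom {α : Type} : Lit α → α
  | .pos a => a
  | .neg a => a

/-- A set of literals is consistent if it contains no complementary pair. -/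
def Consistent {α : Type} (S : Set (Lit α)) : Prop :=
  ∀ a : α, ¬ (Lit.pos a ∈ S ∧ Lit.neg a ∈ S)

/-- A ground rule  l₀ ∨ … ∨ l_m ← l_{m+1}, …, l_k, not l_{k+1}, …, not l_n. -/
structure Rule (α : Type) where
  head : List (Lit α)
  pbody : List (Lit α)
  nbody : List (Lit α)
deriving DecidableEq

/-- `S` satisfies a rule. -/
def Satisfies {α : Type} (S : Set (Lit α)) (r : Rule α) : Prop :=
  ((∀ l ∈ r.pbody, l ∈ S) ∧ (∀ l ∈ r.nbody, l ∉ S)) → ∃ l ∈ r.head, l ∈ S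

/-- The reduct of a ground program relative to `S`. -/
def reduct {α : Type} (P : Set (Rule α)) (S : Set (Lit α)) : Set (Rule α) :=
  {r' | ∃ r ∈ P, (∀ l ∈ r.nbody, l ∉ S) ∧ r' = ⟨r.head, r.pbody, []⟩}

/-- `S` satisfies all rules of `P`. -/
def SatAll {α : Type} (P : Set (Rule α)) (S : Set (Lit α)) : Prop :=
  ∀ r ∈ P, Satisfies S r

/-- `S` is an answer set of the ground program `P`: `S` is consistent and minimal
among consistent sets of literals satisfying all rules of the reduct `P^S`. -/
def IsAnswerSet {α : Type} (P : Set (Rule α)) (S : Set (Lit α)) : Prop :=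
  Consistent S ∧ SatAll (reduct P S) S ∧
    ∀ T, Consistent T → SatAll (reduct P S) T → T ⊆ S → T = S

/-- A cr-rule  l₀ ←⁺ l_1, …, l_k, not l_{k+1}, …, not l_n, with a single literal head. -/
structure CrRule (α : Type) where
  head : Lit α
  pbody : List (Lit α)
  nbody : List (Lit α)
deriving DecidableEq

/-- α(r): the regular rule obtained from a cr-rule by replacing ←⁺ with ←. -/
def CrRule.alpha {α : Type} (r : CrRule α) : Rule α :=
  ⟨[r.head], r.pbody, r.nbody⟩

/-- `X` is an abductive support of the CR-program `(R, CRs)`. -/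
def IsAbductiveSupport {α : Type} [DecidableEq α]
    (R : Finset (Rule α)) (CRs X : Finset (CrRule α)) : Prop :=
  X ⊆ CRs ∧ (∃ S, IsAnswerSet ((R : Set (Rule α)) ∪ ↑(X.image CrRule.alpha)) S) ∧
    ∀ Y ⊆ CRs, (∃ S, IsAnswerSet ((R : Set (Rule α)) ∪ ↑(Y.image CrRule.alpha)) S) → X.card ≤ Y.card

/-- `A` is an answer set of the CR-program `(R, CRs)`. -/
def IsCrAnswerSet {α : Type} [DecidableEq α]
    (R : Finset (Rule α)) (CRs : Finset (CrRule α)) (A : Set (Lit α)) : Prop :=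
  ∃ X, IsAbductiveSupport R CRs X ∧ IsAnswerSet ((R : Set (Rule α)) ∪ ↑(X.image CrRule.alpha)) A

/-- A weak constraint  :~ l_1, …, l_k, not l_{k+1}, …, not l_n. -/
structure WeakConstraint (α : Type) where
  pbody : List (Lit α)
  nbody : List (Lit α)
deriving DecidableEq

/-- `S` violates a weak constraint. -/
def ViolatesWC {α : Type} (S : Set (Lit α)) (w : WeakConstraint α) : Prop :=
  (∀ l ∈ w.pbody, l ∈ S) ∧ (∀ l ∈ w.nbody, l ∉ S)

/-- The number of weak constraints of `W` violated by `S`. -/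
noncomputable def violatedCount {α : Type} (W : Finset (WeakConstraint α))
    (S : Set (Lit α)) : ℕ :=
  {w : WeakConstraint α | w ∈ W ∧ ViolatesWC S w}.ncard

/-- `S` is an answer set of the weak-constraint program `(P, W)`. -/
def IsWcAnswerSet {α : Type} (P : Set (Rule α)) (W : Finset (WeakConstraint α))
    (S : Set (Lit α)) : Prop :=
  IsAnswerSet P S ∧ ∀ T, IsAnswerSet P T → violatedCount W S ≤ violatedCount W T

section Translation

variable {α : Type} [DecidableEq α] {N : ℕ}

/-- Atom `a` occurs in the rule `r`. -/
def OccursInRule (a : α) (r : Rule α) : Prop :=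
  ∃ l ∈ r.head ++ r.pbody ++ r.nbody, l.atom = a

/-- Atom `a` occurs in the cr-rule `r`. -/
def OccursInCrRule (a : α) (r : CrRule α) : Prop :=
  ∃ l ∈ r.head :: (r.pbody ++ r.nbody), l.atom = a

/-- The atoms `appl i` are distinct and fresh: they do not occur in the
CR-program `(R, cr 1, …, cr N)`. -/
def FreshAppl (R : Finset (Rule α)) (cr : Fin N → CrRule α) (appl : Fin N → α) : Prop :=
  Function.Injective appl ∧
    ∀ i : Fin N, (∀ r ∈ R, ¬ OccursInRule (appl i) r) ∧
      (∀ j : Fin N, ¬ OccursInCrRule (appl i) (cr j))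

/-- The rule  appl_i ∨ ¬appl_i ← B_i. -/
def choiceRule (cr : Fin N → CrRule α) (appl : Fin N → α) (i : Fin N) : Rule α :=
  ⟨[Lit.pos (appl i), Lit.neg (appl i)], (cr i).pbody, (cr i).nbody⟩

/-- The rule  h_i ← appl_i, B_i. -/
def applRule (cr : Fin N → CrRule α) (appl : Fin N → α) (i : Fin N) : Rule α :=
  ⟨[(cr i).head], Lit.pos (appl i) :: (cr i).pbody, (cr i).nbody⟩

/-- The hard part of the translation τ(Π). -/
def tauHard (R : Finset (Rule α)) (cr : Fin N → CrRule α) (appl : Fin N → α) :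
    Set (Rule α) :=
  ↑R ∪ Set.range (choiceRule cr appl) ∪ Set.range (applRule cr appl)

/-- The i-th weak constraint  :~ appl_i, B_i  of the translation τ(Π). -/
def wcOf (cr : Fin N → CrRule α) (appl : Fin N → α) (i : Fin N) : WeakConstraint α :=
  ⟨Lit.pos (appl i) :: (cr i).pbody, (cr i).nbody⟩

/-- The set of weak constraints of the translation τ(Π). -/
def tauWeak (cr : Fin N → CrRule α) (appl : Fin N → α) : Finset (WeakConstraint α) :=
  Finset.image (wcOf cr appl) Finset.univ

/-- The literals of `S` not formed from any of the fresh atoms `appl i`. -/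
def restrictAway (appl : Fin N → α) (S : Set (Lit α)) : Set (Lit α) :=
  {l ∈ S | ∀ i : Fin N, l.atom ≠ appl i}

end Translation


/-- Auxiliary: the body of a cr-rule is satisfied by `A`. -/
def CrSatBody {α : Type} (A : Set (Lit α)) (c : CrRule α) : Prop :=
  (∀ l ∈ c.pbody, l ∈ A) ∧ (∀ l ∈ c.nbody, l ∉ A)

lemma consistent_of_subset {α : Type} {S T : Set (Lit α)}
    (h : S ⊆ T) (hT : Consistent T) : Consistent S :=
  fun a ha => hT a ⟨h ha.1, h ha.2⟩


/-- If `A` is an answer set of the finite ground CR-program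
Π = (R, CR), then there is an answer set `S` of the weak-constraint translation τ(Π)
such that `A` is exactly the set of literals of `S` not formed from any of the fresh
atoms `appl 1, …, appl N`. -/
theorem crAnswerSet_exists_translation_answerSet
    {α : Type} [DecidableEq α] [Countable α] {N : ℕ}
    (R : Finset (Rule α)) (cr : Fin N → CrRule α) (hcr : Function.Injective cr)
    (appl : Fin N → α) (hfresh : FreshAppl R cr appl)
    (A : Set (Lit α)) (hA : IsCrAnswerSet R (Finset.image cr Finset.univ) A) :
    ∃ S, IsWcAnswerSet (tauHard R cr appl) (tauWeak cr appl) S ∧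
      A = restrictAway appl S := by
  classical
  obtain ⟨X, ⟨hXsub, -, hXmin⟩, hcons, hsat, hmin⟩ := hA
  obtain ⟨hinj, hfr⟩ := hfresh
  set PX : Set (Rule α) := ↑R ∪ ↑(X.image CrRule.alpha) with hPXdef
  -- freshness facts
  have freshR : ∀ r ∈ R, ∀ l : Lit α,
      (l ∈ r.head ∨ l ∈ r.pbody ∨ l ∈ r.nbody) → ∀ i, l.atom ≠ appl i := by
    intro r hr l hl i h
    exact (hfr i).1 r hr ⟨l, by simp [List.mem_append]; tauto, h⟩
  have freshCr : ∀ (j : Fin N) (l : Lit α),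
      (l = (cr j).head ∨ l ∈ (cr j).pbody ∨ l ∈ (cr j).nbody) → ∀ i, l.atom ≠ appl i := by
    intro j l hl i h
    exact (hfr i).2 j ⟨l, by simp [List.mem_cons, List.mem_append]; tauto, h⟩
  have hXcr : ∀ c ∈ X, ∃ j, cr j = c := by
    intro c hc
    have := hXsub hc
    simpa using this
  have freshPX : ∀ r ∈ PX, ∀ l : Lit α,
      (l ∈ r.head ∨ l ∈ r.pbody ∨ l ∈ r.nbody) → ∀ i, l.atom ≠ appl i := by
    rintro r (hrR | hrX) l hl i
    · exact freshR r hrR l hl i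
    · obtain ⟨c, hc, rfl⟩ := Finset.mem_image.mp (Finset.mem_coe.mp hrX)
      obtain ⟨j, rfl⟩ := hXcr c hc
      refine freshCr j l ?_ i
      simpa [CrRule.alpha] using hl
  -- A contains no appl literals
  have hAfree : ∀ l ∈ A, ∀ i, l.atom ≠ appl i := by
    have h0 : restrictAway appl A = A := by
      apply hmin
      · exact consistent_of_subset (fun l hl => hl.1) hcons
      · rintro r' ⟨r, hrPX, hnb, rfl⟩ ⟨hp, -⟩
        obtain ⟨l, hlh, hlA⟩ := hsat _ ⟨r, hrPX, hnb, rfl⟩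
          ⟨fun l hl => (hp l hl).1, by simp⟩
        exact ⟨l, hlh, hlA, freshPX r hrPX l (Or.inl hlh)⟩
      · exact fun l hl => hl.1
    intro l hl i
    rw [← h0] at hl
    exact hl.2 i
  -- construction of S
  set pick : Fin N → Lit α :=
    fun i => if cr i ∈ X then Lit.pos (appl i) else Lit.neg (appl i) with hpick
  set S : Set (Lit α) := A ∪ (pick '' {i | CrSatBody A (cr i)}) with hSdef
  have hpickatom : ∀ i, (pick i).atom = appl i := by
    intro i; by_cases h : cr i ∈ X <;> simp [hpick, h, Lit.atom]
  have hSmemA : ∀ l : Lit α, (∀ i, l.atom ≠ appl i) → (l ∈ S ↔ l ∈ A) := by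
    intro l hl
    constructor
    · rintro (h | ⟨i, -, rfl⟩)
      · exact h
      · exact absurd (hpickatom i) (hl i)
    · exact Or.inl
  have hposS : ∀ i, (Lit.pos (appl i) ∈ S ↔ CrSatBody A (cr i) ∧ cr i ∈ X) := by
    intro i
    constructor
    · rintro (h | ⟨j, hj, hval⟩)
      · exact absurd rfl (hAfree _ h i)
      · by_cases hx : cr j ∈ X
        · simp only [hpick, hx, if_pos] at hval
          obtain rfl : j = i := hinj (Lit.pos.inj hval)
          exact ⟨hj, hx⟩
        · simp only [hpick, hx, if_neg, not_false_iff] at hval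
          exact absurd hval (by simp)
    · rintro ⟨hb, hx⟩
      exact Or.inr ⟨i, hb, by simp [hpick, hx]⟩
  have hnegS : ∀ i, (Lit.neg (appl i) ∈ S ↔ CrSatBody A (cr i) ∧ cr i ∉ X) := by
    intro i
    constructor
    · rintro (h | ⟨j, hj, hval⟩)
      · exact absurd rfl (hAfree _ h i)
      · by_cases hx : cr j ∈ X
        · simp only [hpick, hx, if_pos] at hval
          exact absurd hval (by simp)
        · simp only [hpick, hx, if_neg, not_false_iff] at hval
          obtain rfl : j = i := hinj (Lit.neg.inj hval)
          exact ⟨hj, hx⟩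
    · rintro ⟨hb, hx⟩
      exact Or.inr ⟨i, hb, by simp [hpick, hx]⟩
  -- transfer of cr-rule bodies
  have hbodyS : ∀ j : Fin N, CrSatBody A (cr j) →
      ((∀ l ∈ (cr j).pbody, l ∈ S) ∧ (∀ l ∈ (cr j).nbody, l ∉ S)) := by
    intro j hb
    refine ⟨fun l hl => Or.inl (hb.1 l hl), fun l hl hlS => ?_⟩
    exact hb.2 l hl ((hSmemA l (freshCr j l (Or.inr (Or.inr hl)))).1 hlS)
  have hbodyS' : ∀ j : Fin N,
      (∀ l ∈ (cr j).pbody, l ∈ S) → (∀ l ∈ (cr j).nbody, l ∉ S) → CrSatBody A (cr j) := by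
    intro j hp hn
    refine ⟨fun l hl => (hSmemA l (freshCr j l (Or.inr (Or.inl hl)))).1 (hp l hl),
      fun l hl hlA => hn l hl (Or.inl hlA)⟩
  -- consistency of S
  have hScons : Consistent S := by
    intro a ⟨hp, hn⟩
    by_cases h : ∃ i, a = appl i
    · obtain ⟨i, rfl⟩ := h
      exact ((hnegS i).1 hn).2 ((hposS i).1 hp).2
    · push_neg at h
      have hp' := (hSmemA (Lit.pos a) (by simpa [Lit.atom] using h)).1 hp
      have hn' := (hSmemA (Lit.neg a) (by simpa [Lit.atom] using h)).1 hn
      exact hcons a ⟨hp', hn'⟩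
  -- S is an answer set of tauHard
  have hS_sat : SatAll (reduct (tauHard R cr appl) S) S := by
    rintro r' ⟨r, hrP, hnbS, rfl⟩ ⟨hpS, -⟩
    rcases hrP with (hrR | ⟨i, rfl⟩) | ⟨i, rfl⟩
    · -- r ∈ R
      have hnbA : ∀ l ∈ r.nbody, l ∉ A := fun l hl hlA => hnbS l hl (Or.inl hlA)
      have hpA : ∀ l ∈ r.pbody, l ∈ A := fun l hl =>
        (hSmemA l (freshR r hrR l (Or.inr (Or.inl hl)))).1 (hpS l hl)
      obtain ⟨l, hlh, hlA⟩ := hsat _ ⟨r, Or.inl hrR, hnbA, rfl⟩ ⟨hpA, by simp⟩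
      exact ⟨l, hlh, Or.inl hlA⟩
    · -- choice rule i
      have hb : CrSatBody A (cr i) := hbodyS' i hpS hnbS
      by_cases hx : cr i ∈ X
      · exact ⟨Lit.pos (appl i), by simp [choiceRule], (hposS i).2 ⟨hb, hx⟩⟩
      · exact ⟨Lit.neg (appl i), by simp [choiceRule], (hnegS i).2 ⟨hb, hx⟩⟩
    · -- appl rule i
      have hpos : Lit.pos (appl i) ∈ S := hpS _ (by simp [applRule])
      obtain ⟨hb, hx⟩ := (hposS i).1 hpos
      have hmem : CrRule.alpha (cr i) ∈ PX :=
        Or.inr (Finset.mem_coe.mpr (Finset.mem_image_of_mem _ hx))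
      obtain ⟨l, hlh, hlA⟩ := hsat _ ⟨CrRule.alpha (cr i), hmem,
          fun l hl hlA => hb.2 l hl hlA, rfl⟩ ⟨fun l hl => hb.1 l hl, by simp⟩
      simp only [CrRule.alpha, List.mem_singleton] at hlh
      subst hlh
      exact ⟨(cr i).head, by simp [applRule], Or.inl hlA⟩
  have hS_min : ∀ T, Consistent T → SatAll (reduct (tauHard R cr appl) S) T →
      T ⊆ S → T = S := by
    intro T hTcons hTsat hTS
    set T0 : Set (Lit α) := restrictAway appl T with hT0def
    have hT0T : T0 ⊆ T := fun l hl => hl.1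
    have hT0A : T0 ⊆ A := fun l hl => (hSmemA l hl.2).1 (hTS hl.1)
    have hT0sat : SatAll (reduct PX A) T0 := by
      rintro r' ⟨r, hrPX, hnbA, rfl⟩ ⟨hpT0, -⟩
      rcases hrPX with hrR | hrX
      · have hnbS' : ∀ l ∈ r.nbody, l ∉ S := fun l hl hlS =>
          hnbA l hl ((hSmemA l (freshR r hrR l (Or.inr (Or.inr hl)))).1 hlS)
        obtain ⟨l, hlh, hlT⟩ := hTsat _ ⟨r, Or.inl (Or.inl hrR), hnbS', rfl⟩
          ⟨fun l hl => hT0T (hpT0 l hl), by simp⟩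
        exact ⟨l, hlh, hlT, freshR r hrR l (Or.inl hlh)⟩
      · obtain ⟨c, hc, rfl⟩ := Finset.mem_image.mp (Finset.mem_coe.mp hrX)
        obtain ⟨j, rfl⟩ := hXcr c hc
        have hb : CrSatBody A (cr j) :=
          ⟨fun l hl => hT0A (hpT0 l hl), hnbA⟩
        have hnbS' : ∀ l ∈ (cr j).nbody, l ∉ S := (hbodyS j hb).2
        -- choice rule gives pos or neg appl j in T
        obtain ⟨l, hlh, hlT⟩ := hTsat _
          ⟨choiceRule cr appl j, Or.inl (Or.inr ⟨j, rfl⟩), hnbS', rfl⟩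
          ⟨fun l hl => hT0T (hpT0 l hl), by simp⟩
        simp only [choiceRule, List.mem_cons, List.mem_singleton] at hlh
        have hposT : Lit.pos (appl j) ∈ T := by
          rcases hlh with rfl | rfl | h
          · exact hlT
          · exact absurd ((hnegS j).1 (hTS hlT)).2 (by simpa using hc)
          · exact absurd h (by simp)
        -- appl rule gives head in T
        obtain ⟨l, hlh, hlT⟩ := hTsat _
          ⟨applRule cr appl j, Or.inr ⟨j, rfl⟩, hnbS', rfl⟩
          ⟨by
            intro l hl
            simp only [applRule, List.mem_cons] at hl
            rcases hl with rfl | hl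
            · exact hposT
            · exact hT0T (hpT0 l hl), by simp⟩
        simp only [applRule, List.mem_singleton] at hlh
        subst hlh
        refine ⟨(cr j).head, by simp [CrRule.alpha], hlT, freshCr j _ (Or.inl rfl)⟩
    have hT0A' : T0 = A := hmin T0 (consistent_of_subset hT0T hTcons) hT0sat hT0A
    refine Set.Subset.antisymm hTS ?_
    rintro l (hlA | ⟨i, hb, rfl⟩)
    · have : l ∈ T0 := hT0A' ▸ hlA
      exact this.1
    · have hb' : CrSatBody A (cr i) := hb
      have hnbS' : ∀ l ∈ (cr i).nbody, l ∉ S := (hbodyS i hb').2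
      obtain ⟨l, hlh, hlT⟩ := hTsat _
        ⟨choiceRule cr appl i, Or.inl (Or.inr ⟨i, rfl⟩), hnbS', rfl⟩
        ⟨by
          intro l hl
          have : l ∈ T0 := hT0A' ▸ (hb'.1 l hl)
          exact this.1, by simp⟩
      simp only [choiceRule, List.mem_cons, List.mem_singleton] at hlh
      by_cases hx : cr i ∈ X
      · rcases hlh with rfl | rfl | h
        · simpa [hpick, hx] using hlT
        · exact absurd ((hnegS i).1 (hTS hlT)).2 (by simpa using hx)
        · exact absurd h (by simp)
      · rcases hlh with rfl | rfl | h
        · exact absurd ((hposS i).1 (hTS hlT)).2 hx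
        · simpa [hpick, hx] using hlT
        · exact absurd h (by simp)
  -- counting
  have hwcinj : Function.Injective (wcOf cr appl) := by
    intro i j h
    have := congrArg WeakConstraint.pbody h
    simp only [wcOf, List.cons.injEq] at this
    exact hinj (Lit.pos.inj this.1)
  have hcount : ∀ Z : Set (Lit α), violatedCount (tauWeak cr appl) Z =
      (Finset.univ.filter (fun i => ViolatesWC Z (wcOf cr appl i))).card := by
    intro Z
    unfold violatedCount
    have h1 : {w | w ∈ tauWeak cr appl ∧ ViolatesWC Z w}
        = wcOf cr appl '' {i | ViolatesWC Z (wcOf cr appl i)} := by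
      ext w
      constructor
      · rintro ⟨hw, hv⟩
        obtain ⟨i, -, rfl⟩ := Finset.mem_image.mp hw
        exact ⟨i, hv, rfl⟩
      · rintro ⟨i, hv, rfl⟩
        exact ⟨Finset.mem_image_of_mem _ (Finset.mem_univ i), hv⟩
    rw [h1, Set.ncard_image_of_injective _ hwcinj]
    have h2 : {i | ViolatesWC Z (wcOf cr appl i)}
        = ↑(Finset.univ.filter (fun i => ViolatesWC Z (wcOf cr appl i))) := by
      ext i; simp
    rw [h2, Set.ncard_coe_finset]
  have hviolS : ∀ i, ViolatesWC S (wcOf cr appl i) ↔ (CrSatBody A (cr i) ∧ cr i ∈ X) := by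
    intro i
    constructor
    · rintro ⟨hp, hn⟩
      have hpos : Lit.pos (appl i) ∈ S := hp _ (by simp [wcOf])
      exact (hposS i).1 hpos
    · rintro ⟨hb, hx⟩
      refine ⟨?_, (hbodyS i hb).2⟩
      intro l hl
      simp only [wcOf, List.mem_cons] at hl
      rcases hl with rfl | hl
      · exact (hposS i).2 ⟨hb, hx⟩
      · exact (hbodyS i hb).1 l hl
  have hScount : violatedCount (tauWeak cr appl) S ≤ X.card := by
    rw [hcount]
    apply Finset.card_le_card_of_injOn cr
    · intro i hi
      exact ((hviolS i).1 (Finset.mem_filter.mp hi).2).2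
    · exact fun a _ b _ h => hcr h
  -- optimality
  have hopt : ∀ T, IsAnswerSet (tauHard R cr appl) T →
      violatedCount (tauWeak cr appl) S ≤ violatedCount (tauWeak cr appl) T := by
    intro T ⟨hTcons, hTsat, hTmin⟩
    set Y : Finset (CrRule α) :=
      (Finset.univ.filter (fun i => ViolatesWC T (wcOf cr appl i))).image cr with hYdef
    have hYsub : Y ⊆ Finset.image cr Finset.univ :=
      Finset.image_subset_image (Finset.filter_subset _ _)
    have hYmem : ∀ c ∈ Y, ∃ i, cr i = c ∧ ViolatesWC T (wcOf cr appl i) := by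
      intro c hc
      obtain ⟨i, hi, rfl⟩ := Finset.mem_image.mp hc
      exact ⟨i, rfl, (Finset.mem_filter.mp hi).2⟩
    set T0 : Set (Lit α) := restrictAway appl T with hT0def
    have hT0T : T0 ⊆ T := fun l hl => hl.1
    set PY : Set (Rule α) := ↑R ∪ ↑(Y.image CrRule.alpha) with hPYdef
    have hT0ans : IsAnswerSet PY T0 := by
      refine ⟨consistent_of_subset hT0T hTcons, ?_, ?_⟩
      · rintro r' ⟨r, hrPY, hnbT0, rfl⟩ ⟨hpT0, -⟩
        rcases hrPY with hrR | hrY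
        · have hnbT : ∀ l ∈ r.nbody, l ∉ T := fun l hl hlT =>
            hnbT0 l hl ⟨hlT, freshR r hrR l (Or.inr (Or.inr hl))⟩
          obtain ⟨l, hlh, hlT⟩ := hTsat _ ⟨r, Or.inl (Or.inl hrR), hnbT, rfl⟩
            ⟨fun l hl => hT0T (hpT0 l hl), by simp⟩
          exact ⟨l, hlh, hlT, freshR r hrR l (Or.inl hlh)⟩
        · obtain ⟨c, hc, rfl⟩ := Finset.mem_image.mp (Finset.mem_coe.mp hrY)
          obtain ⟨j, rfl, hjv⟩ := hYmem c hc
          obtain ⟨hjp, hjn⟩ := hjv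
          have hpos : Lit.pos (appl j) ∈ T := hjp _ (by simp [wcOf])
          obtain ⟨l, hlh, hlT⟩ := hTsat _
            ⟨applRule cr appl j, Or.inr ⟨j, rfl⟩,
              fun l hl => hjn l (by simpa [wcOf, applRule] using hl), rfl⟩
            ⟨by
              intro l hl
              simp only [applRule, List.mem_cons] at hl
              rcases hl with rfl | hl
              · exact hpos
              · exact hjp l (by simp [wcOf, hl]), by simp⟩
          simp only [applRule, List.mem_singleton] at hlh
          subst hlh
          exact ⟨(cr j).head, by simp [CrRule.alpha], hlT, freshCr j _ (Or.inl rfl)⟩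
      · intro U hUcons hUsat hUT0
        set U' : Set (Lit α) := U ∪ {l | l ∈ T ∧ ∃ i, l.atom = appl i} with hU'def
        have hU'T : U' ⊆ T := by
          rintro l (hl | ⟨hl, -⟩)
          · exact hT0T (hUT0 hl)
          · exact hl
        have hU'free : ∀ l ∈ U', (∀ i, l.atom ≠ appl i) → l ∈ U := by
          rintro l (hl | ⟨-, i, hi⟩) hfr'
          · exact hl
          · exact absurd hi (hfr' i)
        have hU'sat : SatAll (reduct (tauHard R cr appl) T) U' := by
          rintro r' ⟨r, hrP, hnbT, rfl⟩ ⟨hpU', -⟩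
          rcases hrP with (hrR | ⟨i, rfl⟩) | ⟨i, rfl⟩
          · have hpU : ∀ l ∈ r.pbody, l ∈ U := fun l hl =>
              hU'free l (hpU' l hl) (freshR r hrR l (Or.inr (Or.inl hl)))
            have hnbT0' : ∀ l ∈ r.nbody, l ∉ T0 := fun l hl hlT0 =>
              hnbT l hl (hT0T hlT0)
            obtain ⟨l, hlh, hlU⟩ := hUsat _ ⟨r, Or.inl hrR, hnbT0', rfl⟩
              ⟨hpU, by simp⟩
            exact ⟨l, hlh, Or.inl hlU⟩
          · -- choice rule i
            have hpT : ∀ l ∈ (cr i).pbody, l ∈ T := by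
              intro l hl
              exact hT0T (hUT0 (hU'free l (hpU' l (by simp [choiceRule, hl]))
                (freshCr i l (Or.inr (Or.inl hl)))))
            obtain ⟨l, hlh, hlT⟩ := hTsat _
              ⟨choiceRule cr appl i, Or.inl (Or.inr ⟨i, rfl⟩),
                by simpa [choiceRule] using hnbT, rfl⟩
              ⟨by simpa [choiceRule] using hpT, by simp⟩
            refine ⟨l, hlh, Or.inr ⟨hlT, i, ?_⟩⟩
            simp only [choiceRule, List.mem_cons, List.mem_singleton] at hlh
            rcases hlh with rfl | rfl | h
            · rfl
            · rfl
            · exact absurd h (by simp)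
          · -- appl rule i
            have hposU' : Lit.pos (appl i) ∈ U' := hpU' _ (by simp [applRule])
            have hposT : Lit.pos (appl i) ∈ T := hU'T hposU'
            have hpT : ∀ l ∈ (cr i).pbody, l ∈ U := by
              intro l hl
              exact hU'free l (hpU' l (by simp [applRule, hl]))
                (freshCr i l (Or.inr (Or.inl hl)))
            have hnbT' : ∀ l ∈ (cr i).nbody, l ∉ T := by
              simpa [applRule] using hnbT
            have hvi : ViolatesWC T (wcOf cr appl i) := by
              refine ⟨?_, by simpa [wcOf] using hnbT'⟩
              intro l hl
              simp only [wcOf, List.mem_cons] at hl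
              rcases hl with rfl | hl
              · exact hposT
              · exact hT0T (hUT0 (hpT l hl))
            have hYi : CrRule.alpha (cr i) ∈ PY := by
              refine Or.inr (Finset.mem_coe.mpr (Finset.mem_image_of_mem _ ?_))
              exact Finset.mem_image_of_mem _ (Finset.mem_filter.mpr ⟨Finset.mem_univ i, hvi⟩)
            obtain ⟨l, hlh, hlU⟩ := hUsat _
              ⟨CrRule.alpha (cr i), hYi,
                fun l hl hlT0 => hnbT' l hl (hT0T hlT0), rfl⟩
              ⟨by
                intro l hl
                simp only [CrRule.alpha] at hl
                exact hpT l hl, by simp⟩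
            simp only [CrRule.alpha, List.mem_singleton] at hlh
            subst hlh
            exact ⟨(cr i).head, by simp [applRule], Or.inl hlU⟩
        have hU'T' : U' = T := hTmin U' (consistent_of_subset hU'T hTcons) hU'sat hU'T
        refine Set.Subset.antisymm hUT0 ?_
        intro l hl
        have hlT : l ∈ U' := hU'T' ▸ hl.1
        exact hU'free l hlT hl.2
    have hXY : X.card ≤ Y.card := hXmin Y hYsub ⟨T0, hT0ans⟩
    have hYcard : Y.card =
        (Finset.univ.filter (fun i => ViolatesWC T (wcOf cr appl i))).card :=
      Finset.card_image_of_injOn (fun a _ b _ h => hcr h)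
    calc violatedCount (tauWeak cr appl) S ≤ X.card := hScount
      _ ≤ Y.card := hXY
      _ = violatedCount (tauWeak cr appl) T := by rw [hYcard, hcount]
  refine ⟨S, ⟨⟨hScons, hS_sat, hS_min⟩, hopt⟩, ?_⟩
  ext l
  constructor
  · intro hlA
    exact ⟨Or.inl hlA, hAfree l hlA⟩
  · rintro ⟨hlS, hfr'⟩
    exact (hSmemA l hfr').1 hlS
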